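/- Let Γ = D_k be the dihedral group of order 2k acting on the regular k-gon Δ, with k divisible by 4, Δ' its vertex set and Δ'' its edge set, and Π the order-2 subgroup of the rotation subgroup Σ. Then the quadruple of permutation Z[Γ]-modules 0 → Z → Z[Δ'] ⊕ Z → Z[Δ''] ⊕ Z[Δ'/Π] → Z[Δ''/Π] → 0 is exact, with maps: first, 1 ↦ (#Δ', -2); middle, (x, n) ↦ ((σ^{-1/2}+σ^{1/2})(x) + n·#Δ'', pr_Π(x) + n·#(Δ'/Π)); last, (y, z̄) ↦ pr_Π(y) - (σ̄^{-1/2}+σ̄^{1/2})(z̄); where σ^{±1/2}: Δ' → Δ'' is the map sending a vertex to one of its adjacent edges such that the composite Δ' → Δ'' → Δ' is the rotation σ^{±1}, and analogously modulo Π. -/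
import Mathlib

/-- The dihedral exact quadruple.  For `4 ∣ k`, the vertices of the regular `k`-gon
are modelled as `ZMod k`, the edges as `ZMod k` (edge `e = {e, e+1}`), the rotation
`σ` acts by `+1`, `Π = {0, k/2}`, and the `Π`-orbit spaces are `ZMod (k/2)` with
lift `j ↦ j.val`.  In this model, `ℤ[Δ'] = ℤ[Δ''] = (ZMod k → ℤ)` and
`ℤ[Δ'/Π] = ℤ[Δ''/Π] = (ZMod (k/2) → ℤ)`; the half-shift operator
`σ^{-1/2} + σ^{1/2} : ℤ[Δ'] → ℤ[Δ'']` is `x ↦ (e ↦ x e + x (e+1))`, and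
`pr_Π(x)(j) = x(ĵ) + x(ĵ + k/2)`.  The quadruple
`0 → ℤ → ℤ[Δ']⊕ℤ → ℤ[Δ'']⊕ℤ[Δ'/Π] → ℤ[Δ''/Π] → 0` with maps `1 ↦ (#Δ', -2)`,
`(x,n) ↦ ((σ^{-1/2}+σ^{1/2})x + n·#Δ'', pr_Π(x) + n·#(Δ'/Π))`,
`(y,z̄) ↦ pr_Π(y) - (σ̄^{-1/2}+σ̄^{1/2})z̄` is exact. -/
theorem stmt_12 (k : ℕ) (hk : 0 < k) (h4 : 4 ∣ k)
    (d₀ : ℤ → (ZMod k → ℤ) × ℤ)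
    (hd₀ : ∀ n : ℤ, d₀ n = (fun _ => n, -2 * n))
    (d₁ : (ZMod k → ℤ) × ℤ → (ZMod k → ℤ) × (ZMod (k / 2) → ℤ))
    (hd₁ : ∀ x : (ZMod k → ℤ) × ℤ, d₁ x =
      (fun e => x.1 e + x.1 (e + 1) + x.2,
       fun j => x.1 ((j.val : ℕ) : ZMod k) +
         x.1 (((j.val : ℕ) : ZMod k) + ((k / 2 : ℕ) : ZMod k)) + x.2))
    (d₂ : (ZMod k → ℤ) × (ZMod (k / 2) → ℤ) → (ZMod (k / 2) → ℤ))
    (hd₂ : ∀ y : (ZMod k → ℤ) × (ZMod (k / 2) → ℤ), d₂ y =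
      fun j => y.1 ((j.val : ℕ) : ZMod k) +
        y.1 (((j.val : ℕ) : ZMod k) + ((k / 2 : ℕ) : ZMod k)) -
        (y.2 j + y.2 (j + 1))) :
    Function.Injective d₀ ∧ Function.Exact d₀ d₁ ∧ Function.Exact d₁ d₂ ∧
      Function.Surjective d₂ := by
  obtain ⟨c, hc⟩ := h4
  set m := k / 2 with hmdef
  have hkm : k = 2 * m := by omega
  have hm0 : 0 < m := by omega
  have hmc : m = 2 * c := by omega
  have hmeven : Even m := ⟨c, by omega⟩
  have hkeven : Even k := ⟨m, by omega⟩
  haveI : NeZero k := ⟨by omega⟩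
  haveI : NeZero m := ⟨by omega⟩
  -- basic ZMod facts
  have hvlt : ∀ e : ZMod k, e.val < k := fun e => e.val_lt
  have hjlt : ∀ j : ZMod m, j.val < m := fun j => j.val_lt
  have hvm : ((m : ZMod k)).val = m := ZMod.val_natCast_of_lt (by omega)
  have hlift : ∀ j : ZMod m, ((j.val : ZMod k)).val = j.val := by
    intro j
    exact ZMod.val_natCast_of_lt (by have := hjlt j; omega)
  have hliftm : ∀ j : ZMod m, (((j.val : ZMod k)) + (m : ZMod k)).val = j.val + m := by
    intro j
    rw [ZMod.val_add, hlift, hvm, Nat.mod_eq_of_lt (by have := hjlt j; omega)]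
  have hself : ∀ e : ZMod k, ((e.val : ℕ) : ZMod k) = e := by
    intro e
    simp [ZMod.natCast_val, ZMod.cast_id]
  have hselfm : ∀ j : ZMod m, ((j.val : ℕ) : ZMod m) = j := by
    intro j
    simp [ZMod.natCast_val, ZMod.cast_id]
  -- successor of val
  have hsucc : ∀ e : ZMod k, (e + 1).val = e.val + 1 ∨ (e.val = k - 1 ∧ (e + 1).val = 0) := by
    intro e
    have h1 : (e + 1).val = (e.val + 1 % k) % k := by
      rw [ZMod.val_add, ZMod.val_one_eq_one_mod]
    have hek : e.val < k := hvlt e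
    have h1k : 1 % k = 1 := Nat.mod_eq_of_lt (by omega)
    rw [h1k] at h1
    rcases Nat.lt_or_ge (e.val + 1) k with h | h
    · left; rw [h1, Nat.mod_eq_of_lt h]
    · right
      have hek2 : e.val + 1 = k := by omega
      refine ⟨by omega, ?_⟩
      rw [h1, hek2, Nat.mod_self]
  -- parity of successor
  have hpar : ∀ e : ZMod k, (e + 1).val % 2 ≠ e.val % 2 := by
    intro e
    rcases hsucc e with h | ⟨h1, h2⟩
    · omega
    · rw [h2, h1]; omega
  -- key lift lemma
  have hL2 : ∀ (f : ZMod k → ℤ) (j : ZMod m),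
      f (((j + 1).val : ZMod k)) + f (((j + 1).val : ZMod k) + (m : ZMod k)) =
      f ((j.val : ZMod k) + 1) + f (((j.val : ZMod k) + 1) + (m : ZMod k)) := by
    intro f j
    have hjv : j.val < m := hjlt j
    have hadd : (j + 1).val = (j.val + 1) % m := by
      rw [ZMod.val_add, ZMod.val_one_eq_one_mod, Nat.add_mod_mod]
    rcases Nat.lt_or_ge (j.val + 1) m with h | h
    · rw [hadd, Nat.mod_eq_of_lt h]
      have hcast : ((j.val + 1 : ℕ) : ZMod k) = (j.val : ZMod k) + 1 := by push_cast; ring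
      rw [hcast]
    · have hjm : j.val + 1 = m := by omega
      have h0 : (j + 1).val = 0 := by rw [hadd, hjm, Nat.mod_self]
      have hcast : (j.val : ZMod k) + 1 = (m : ZMod k) := by
        have h' : ((j.val + 1 : ℕ) : ZMod k) = ((m : ℕ) : ZMod k) := by rw [hjm]
        push_cast at h'
        exact h'
      have hmm : (m : ZMod k) + (m : ZMod k) = 0 := by
        have h2 : ((m : ℕ) : ZMod k) + ((m : ℕ) : ZMod k) = ((m + m : ℕ) : ZMod k) := by
          push_cast; ring
        rw [h2, show m + m = k by omega, ZMod.natCast_self]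
      rw [h0, hcast]
      push_cast
      rw [hmm, zero_add]
      exact add_comm _ _
  refine ⟨?_, ?_, ?_, ?_⟩
  · -- injectivity of d₀
    intro a b hab
    have h2 := congrArg Prod.snd hab
    rw [hd₀ a, hd₀ b] at h2
    simp only at h2
    linarith
  · -- exactness at spot 1
    intro p
    constructor
    · intro hp
      obtain ⟨x, n⟩ := p
      rw [hd₁] at hp
      have h1 : ∀ e : ZMod k, x e + x (e + 1) + n = 0 := by
        intro e
        have := congrArg (fun q => q.1 e) hp
        simpa using this
      have h2 : ∀ j : ZMod m, x ((j.val : ℕ) : ZMod k) +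
          x (((j.val : ℕ) : ZMod k) + (m : ZMod k)) + n = 0 := by
        intro j
        have := congrArg (fun q => q.2 j) hp
        simpa using this
      have hper : ∀ e : ZMod k, x (e + 2) = x e := by
        intro e
        have ha := h1 e
        have hb := h1 (e + 1)
        have he : e + 1 + 1 = e + 2 := by ring
        rw [he] at hb
        linarith
      have heven : ∀ t : ℕ, x (((2 * t : ℕ) : ZMod k)) = x 0 := by
        intro t
        induction t with
        | zero => norm_num
        | succ s ih =>
          have hcast : ((2 * (s + 1) : ℕ) : ZMod k) = ((2 * s : ℕ) : ZMod k) + 2 := by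
            push_cast; ring
          rw [hcast, hper, ih]
      have hxm : x ((m : ZMod k)) = x 0 := by
        have hh := heven c
        rw [show ((2 * c : ℕ) : ZMod k) = ((m : ℕ) : ZMod k) by rw [← hmc]] at hh
        exact hh
      have hn : n = -2 * x 0 := by
        have h20 := h2 0
        simp only [ZMod.val_zero, Nat.cast_zero, zero_add] at h20
        rw [hxm] at h20
        linarith
      have hconst : ∀ t : ℕ, x ((t : ZMod k)) = x 0 := by
        intro t
        induction t with
        | zero => norm_num
        | succ s ih =>
          have ha := h1 ((s : ZMod k))
          have hcast : ((s + 1 : ℕ) : ZMod k) = (s : ZMod k) + 1 := by push_cast; ring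
          rw [hcast]
          rw [ih, hn] at ha
          linarith
      refine ⟨x 0, ?_⟩
      rw [hd₀]
      refine Prod.ext ?_ ?_
      · funext e
        simp only
        rw [← hself e, hconst e.val]
      · simp only
        linarith [hn]
    · rintro ⟨a, rfl⟩
      rw [hd₀ a, hd₁]
      refine Prod.ext ?_ ?_
      · funext e; simp only [Prod.fst_zero, Pi.zero_apply]; ring
      · funext j; simp only [Prod.snd_zero, Pi.zero_apply]; ring
  · -- exactness at spot 2
    intro p
    constructor
    · intro hp
      obtain ⟨y, z⟩ := p
      rw [hd₂] at hp
      have h : ∀ j : ZMod m, y ((j.val : ℕ) : ZMod k) +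
          y (((j.val : ℕ) : ZMod k) + (m : ZMod k)) = z j + z (j + 1) := by
        intro j
        have := congrFun hp j
        simp only [Pi.zero_apply] at this
        linarith [this]
      set S : ℕ → ℤ := fun i => ∑ t ∈ Finset.range i, (-1 : ℤ) ^ t * y ((t : ZMod k))
        with hSdef
      have hSsucc : ∀ i : ℕ, S (i + 1) = S i + (-1 : ℤ) ^ i * y ((i : ZMod k)) := by
        intro i
        rw [hSdef]
        exact Finset.sum_range_succ _ i
      have hS0 : S 0 = 0 := by rw [hSdef]; simp
      -- Claim A : S k = 0
      have hA : S k = 0 := by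
        rw [show k = m + m by omega]
        have hsplit : S (m + m) = (∑ t ∈ Finset.range m, (-1 : ℤ) ^ t * y ((t : ZMod k))) +
            ∑ t ∈ Finset.range m, (-1 : ℤ) ^ (m + t) * y (((m + t : ℕ) : ZMod k)) := by
          rw [hSdef]
          exact Finset.sum_range_add _ m m
        have hterm : ∀ t ∈ Finset.range m, (-1 : ℤ) ^ (m + t) * y (((m + t : ℕ) : ZMod k)) =
            (-1 : ℤ) ^ t * y (((t : ℕ) : ZMod k) + (m : ZMod k)) := by
          intro t _
          have hp1 : ((-1 : ℤ)) ^ (m + t) = (-1) ^ t := by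
            rw [pow_add, Even.neg_one_pow hmeven, one_mul]
          have hp2 : ((m + t : ℕ) : ZMod k) = ((t : ℕ) : ZMod k) + (m : ZMod k) := by
            push_cast; ring
          rw [hp1, hp2]
        rw [Finset.sum_congr rfl hterm] at hsplit
        have hzsum : S (m + m) = ∑ t ∈ Finset.range m,
            (-1 : ℤ) ^ t * (z ((t : ZMod m)) + z ((t : ZMod m) + 1)) := by
          rw [hsplit, ← Finset.sum_add_distrib]
          refine Finset.sum_congr rfl ?_
          intro t ht
          have htm : t < m := Finset.mem_range.mp ht
          have hval : ((t : ZMod m)).val = t := ZMod.val_natCast_of_lt htm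
          have hht := h ((t : ZMod m))
          rw [hval] at hht
          rw [← hht]
          ring
        set u : ℕ → ℤ := fun t => (-1 : ℤ) ^ t * z ((t : ZMod m)) with hudef
        have hsum2 : S (m + m) = (∑ t ∈ Finset.range m, u t) -
            ∑ t ∈ Finset.range m, u (t + 1) := by
          rw [hzsum, ← Finset.sum_sub_distrib]
          refine Finset.sum_congr rfl ?_
          intro t _
          rw [hudef]
          simp only
          have hc1 : ((t + 1 : ℕ) : ZMod m) = (t : ZMod m) + 1 := by push_cast; ring
          rw [hc1, pow_succ]
          ring
        have hshift : ∑ t ∈ Finset.range m, u (t + 1) = ∑ t ∈ Finset.range m, u t := by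
          have hr1 : ∑ t ∈ Finset.range (m + 1), u t =
              (∑ t ∈ Finset.range m, u (t + 1)) + u 0 := Finset.sum_range_succ' u m
          have hr2 : ∑ t ∈ Finset.range (m + 1), u t =
              (∑ t ∈ Finset.range m, u t) + u m := Finset.sum_range_succ u m
          have hum : u m = u 0 := by
            rw [hudef]
            simp only
            rw [ZMod.natCast_self, Even.neg_one_pow hmeven]
            norm_num
          rw [hum] at hr2
          linarith [hr1, hr2]
        rw [hsum2, hshift]
        ring
      -- base solution
      set x₀ : ZMod k → ℤ := fun e => (-1 : ℤ) ^ (e.val + 1) * S e.val with hx0def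
      have hB : ∀ e : ZMod k, x₀ e + x₀ (e + 1) = y e := by
        intro e
        rcases hsucc e with hsu | ⟨hk1, h0⟩
        · rw [hx0def]
          simp only
          rw [hsu, hSsucc e.val, hself e]
          have ha : (-1 : ℤ) ^ e.val * (-1 : ℤ) ^ e.val = 1 := by
            rw [← pow_add]
            exact Even.neg_one_pow ⟨e.val, rfl⟩
          have hp1 : (-1 : ℤ) ^ (e.val + 1) = -(-1 : ℤ) ^ e.val := by
            rw [pow_succ]; ring
          have hp2 : (-1 : ℤ) ^ (e.val + 1 + 1) = (-1 : ℤ) ^ e.val := by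
            rw [pow_succ, pow_succ]; nlinarith [ha]
          rw [hp1, hp2]
          linear_combination y e * ha
        · rw [hx0def]
          simp only
          rw [h0, hS0]
          have hkval : e.val + 1 = k := by omega
          have hodde : Odd e.val := ⟨m - 1, by omega⟩
          have hx1 : (-1 : ℤ) ^ (e.val + 1) = 1 := by
            rw [hkval]
            exact Even.neg_one_pow hkeven
          have hSk := hSsucc e.val
          rw [hkval, hA, hself e, Odd.neg_one_pow hodde] at hSk
          rw [hx1]
          norm_num
          linarith [hSk]
      -- the candidate second component
      set w : ZMod m → ℤ := fun j => x₀ ((j.val : ZMod k)) + x₀ ((j.val : ZMod k) + (m : ZMod k))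
        with hwdef
      have hW : ∀ j : ZMod m, w j + w (j + 1) = z j + z (j + 1) := by
        intro j
        have e1 := hB ((j.val : ZMod k))
        have e2 := hB ((j.val : ZMod k) + (m : ZMod k))
        have e3 := hL2 x₀ j
        have hhj := h j
        rw [hwdef]
        simp only
        rw [show (j.val : ZMod k) + (m : ZMod k) + 1 = (j.val : ZMod k) + 1 + (m : ZMod k)
          by ring] at e2
        linarith [e1, e2, e3, hhj]
      set d : ℤ := w 0 - z 0 with hddef
      have hCnat : ∀ t : ℕ, w ((t : ZMod m)) - z ((t : ZMod m)) = (-1 : ℤ) ^ t * d := by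
        intro t
        induction t with
        | zero => simp only [Nat.cast_zero, pow_zero, one_mul, hddef]
        | succ s ih =>
          have hws := hW ((s : ZMod m))
          have hc1 : ((s + 1 : ℕ) : ZMod m) = (s : ZMod m) + 1 := by push_cast; ring
          rw [hc1, pow_succ]
          linarith [hws, ih]
      have hC : ∀ j : ZMod m, w j - z j = (-1 : ℤ) ^ j.val * d := by
        intro j
        have hcj := hCnat j.val
        rwa [hselfm j] at hcj
      -- final witness
      refine ⟨⟨fun e => x₀ e + (if e.val % 2 = 0 then -d else 0), d⟩, ?_⟩
      rw [hd₁]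
      refine Prod.ext ?_ ?_
      · funext e
        simp only
        have hbe := hB e
        have hpe := hpar e
        by_cases hce : e.val % 2 = 0
        · have hc2 : ¬((e + 1).val % 2 = 0) := by omega
          rw [if_pos hce, if_neg hc2]
          linarith [hbe]
        · have hc2 : (e + 1).val % 2 = 0 := by omega
          rw [if_neg hce, if_pos hc2]
          linarith [hbe]
      · funext j
        simp only
        rw [hlift j, hliftm j]
        have hcw := hC j
        rw [hwdef] at hcw
        simp only at hcw
        by_cases hcj : j.val % 2 = 0
        · have hcj2 : (j.val + m) % 2 = 0 := by omega
          rw [if_pos hcj, if_pos hcj2]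
          rw [Even.neg_one_pow (Nat.even_iff.mpr hcj)] at hcw
          linarith [hcw]
        · have hcj2 : ¬((j.val + m) % 2 = 0) := by omega
          rw [if_neg hcj, if_neg hcj2]
          rw [Odd.neg_one_pow (Nat.odd_iff.mpr (by omega))] at hcw
          linarith [hcw]
    · rintro ⟨⟨x, n⟩, rfl⟩
      rw [hd₁, hd₂]
      funext j
      simp only [Pi.zero_apply]
      have key := hL2 x j
      rw [show ((j.val : ℕ) : ZMod k) + (m : ZMod k) + 1 =
          ((j.val : ℕ) : ZMod k) + 1 + (m : ZMod k) by ring]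
      linarith [key]
  · -- surjectivity
    intro w
    refine ⟨⟨fun e => if e.val < m then w ((e.val : ZMod m)) else 0, 0⟩, ?_⟩
    rw [hd₂]
    funext j
    simp only [Pi.zero_apply]
    rw [hlift j, hliftm j]
    rw [if_pos (hjlt j), if_neg (by omega)]
    rw [hselfm j]
    ring
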